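/- Let p be an odd prime and q a prime power. Then Σ_{i≥0} q^{i−(pi+j_i)} = q^{p−2}(q^{(p−2)(p−1)}−1) / ((q^{p−2}−1)(q^{(p−1)²}−1)), where for each i ≥ 0, j_i ∈ [1, p−1] is defined by the congruence i + j_i ≡ 0 (mod p−1). -/

import Mathlib

set_option maxHeartbeats 1000000

private lemma aux_alg (a g d : ℝ) (ha : 1 < a) (hg : 1 < g) (hd : 1 < d) :
    (1 - (g * d)⁻¹)⁻¹ * ((g⁻¹ - 1) / (a⁻¹ - 1)) * d⁻¹
      = a * (g - 1) / ((a - 1) * (g * d - 1)) := by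
  have ha0 : (0:ℝ) < a := by linarith
  have hg0 : (0:ℝ) < g := by linarith
  have hd0 : (0:ℝ) < d := by linarith
  have hgd1 : 1 < g * d := by nlinarith
  have h1 : a - 1 ≠ 0 := by intro h; linarith
  have h2 : g * d - 1 ≠ 0 := by intro h; linarith
  have h3 : a⁻¹ - 1 ≠ 0 := by
    have : a⁻¹ < 1 := by rw [inv_lt_one_iff₀]; right; exact ha
    intro h; linarith
  have h4 : 1 - (g * d)⁻¹ ≠ 0 := by
    have : (g * d)⁻¹ < 1 := by rw [inv_lt_one_iff₀]; right; exact hgd1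
    intro h; linarith
  have hGD : g * d - 1 ≠ 0 := sub_ne_zero.mpr (ne_of_gt hgd1)
  have hA1 : a - 1 ≠ 0 := sub_ne_zero.mpr (ne_of_gt ha)
  have hg1 : g - 1 ≠ 0 := sub_ne_zero.mpr (ne_of_gt hg)
  have eA : (1 - (g * d)⁻¹)⁻¹ = g * d / (g * d - 1) := by
    have : 1 - (g * d)⁻¹ = (g * d - 1) / (g * d) := by
      field_simp
    rw [this, inv_div]
  have eB : (g⁻¹ - 1) / (a⁻¹ - 1) = a * (g - 1) / (g * (a - 1)) := by
    rw [div_eq_div_iff h3 (mul_ne_zero (ne_of_gt hg0) hA1)]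
    field_simp
    ring
  rw [eA, eB]
  rw [div_mul_div_comm, div_mul_eq_mul_div]
  have ed : g * d * (a * (g - 1)) * d⁻¹ = g * (a * (g - 1)) := by
    field_simp
  rw [ed, div_eq_div_iff (mul_ne_zero hGD (mul_ne_zero (ne_of_gt hg0) hA1))
    (mul_ne_zero hA1 hGD)]
  ring

/-- for an odd prime `p`, a prime power `q`, and `j_i ∈ [1, p−1]`
defined by `i + j_i ≡ 0 (mod p−1)`,
`Σ_{i≥0} q^{i−(pi+j_i)} = q^{p−2}(q^{(p−2)(p−1)}−1)/((q^{p−2}−1)(q^{(p−1)²}−1))`. -/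
theorem stmt_18 (p q : ℕ) (hp : p.Prime) (hodd : p ≠ 2)
    (hq : ∃ r k : ℕ, r.Prime ∧ 0 < k ∧ q = r ^ k)
    (j : ℕ → ℕ)
    (hj : ∀ i : ℕ, 1 ≤ j i ∧ j i ≤ p - 1 ∧ (p - 1) ∣ (i + j i)) :
    ∑' i : ℕ, (q : ℝ) ^ ((i : ℤ) - ((p : ℤ) * (i : ℤ) + (j i : ℤ)))
      = (q : ℝ) ^ (p - 2) * ((q : ℝ) ^ ((p - 2) * (p - 1)) - 1) /
          (((q : ℝ) ^ (p - 2) - 1) * ((q : ℝ) ^ ((p - 1) ^ 2) - 1)) := by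
  -- p = k + 2 with k ≥ 1
  have hp3 : 3 ≤ p := by
    rcases Nat.lt_or_ge p 3 with h | h
    · interval_cases p <;> simp_all [Nat.Prime] <;> omega
    · exact h
  obtain ⟨k, hk1, rfl⟩ : ∃ k, 1 ≤ k ∧ p = k + 2 := ⟨p - 2, by omega, by omega⟩
  -- q ≥ 2
  have hq2 : 2 ≤ q := by
    obtain ⟨r0, k0, hr0, hk0, rfl⟩ := hq
    exact Nat.one_lt_pow (by omega) hr0.one_lt
  clear hq hp hodd hp3
  have hQ1 : (1 : ℝ) < (q : ℝ) := by exact_mod_cast hq2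
  have hQ0 : (0 : ℝ) < (q : ℝ) := by linarith
  have hQne : (q : ℝ) ≠ 0 := ne_of_gt hQ0
  -- simplify nat subtractions
  have e1 : k + 2 - 2 = k := by omega
  have e2 : k + 2 - 1 = k + 1 := by omega
  rw [e1, e2]
  set Q : ℝ := (q : ℝ) with hQdef
  set x : ℝ := (Q ^ ((k+1)^2))⁻¹ with hxdef
  set y : ℝ := (Q ^ k)⁻¹ with hydef
  set c : ℝ := (Q ^ (k+1))⁻¹ with hcdef
  have hpow1 : ∀ m : ℕ, 1 ≤ m → 1 < Q ^ m := fun m hm => one_lt_pow₀ hQ1 (by omega)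
  have hx1 : x < 1 := by
    rw [hxdef, inv_lt_one_iff₀]; right; exact hpow1 _ (Nat.one_le_pow _ _ (by omega))
  have hx0 : 0 ≤ x := by positivity
  have hy1 : y < 1 := by rw [hydef]; rw [inv_lt_one_iff₀]; right; exact hpow1 _ hk1
  have hy0 : 0 ≤ y := by positivity
  -- per-term rewrite
  have hterm : ∀ i : ℕ, (q : ℝ) ^ ((i : ℤ) - (((k+2 : ℕ) : ℤ) * (i : ℤ) + (j i : ℤ)))
      = x ^ (i / (k+1)) * y ^ (i % (k+1)) * c := by
    intro i
    obtain ⟨h1, h2, h3⟩ := hj i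
    rw [e2] at h2 h3
    set n := i / (k+1) with hn
    set r := i % (k+1) with hr
    have hdm : (k+1) * n + r = i := Nat.div_add_mod i (k+1)
    have hmlt : r < k + 1 := Nat.mod_lt _ (by omega)
    have hsum : r + j i = k + 1 := by
      have hd1 : (k+1) ∣ (k+1) * n := Dvd.intro _ rfl
      have hd2 : (k+1) ∣ (r + j i) := by
        have heq : i + j i = (k+1) * n + (r + j i) := by omega
        exact (Nat.dvd_add_right hd1).mp (heq ▸ h3)
      obtain ⟨c', hc'⟩ := hd2
      match c', hc' with
      | 0, hc' => omega
      | 1, hc' => omega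
      | (c''+2), hc' =>
        exfalso
        have hge : (k+1)*2 ≤ (k+1)*(c''+2) := Nat.mul_le_mul_left _ (by omega)
        omega
    have hexp : (i : ℤ) - (((k+2 : ℕ) : ℤ) * (i : ℤ) + (j i : ℤ))
        = -(((k+1)^2 * n + k * r + (k+1) : ℕ) : ℤ) := by
      have hi' : (i : ℤ) = ((k:ℤ)+1) * (n : ℤ) + (r : ℤ) := by exact_mod_cast hdm.symm
      have hji : (j i : ℤ) = ((k:ℤ)+1) - (r : ℤ) := by
        have : (r : ℤ) + (j i : ℤ) = (k:ℤ) + 1 := by exact_mod_cast hsum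
        linarith
      push_cast
      rw [hji, hi']
      ring
    rw [hexp, zpow_neg, zpow_natCast, pow_add, pow_add, pow_mul, pow_mul, mul_inv, mul_inv,
      hxdef, hydef, hcdef, inv_pow, inv_pow]
  rw [tsum_congr hterm, tsum_mul_right]
  -- reindex via divMod
  haveI : NeZero (k+1) := ⟨by omega⟩
  have hre : ∑' i : ℕ, x ^ (i / (k+1)) * y ^ (i % (k+1))
      = ∑' z : ℕ × Fin (k+1), x ^ z.1 * y ^ (z.2 : ℕ) := by
    rw [← Equiv.tsum_eq (Nat.divModEquiv (k+1)) (fun z : ℕ × Fin (k+1) => x ^ z.1 * y ^ (z.2 : ℕ))]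
    refine tsum_congr fun i => ?_
    simp only [Nat.divModEquiv_apply, Fin.val_natCast, Fin.val_ofNat]
  have hsx : Summable fun n : ℕ => x ^ n := summable_geometric_of_lt_one hx0 hx1
  have hsy : Summable fun r : Fin (k+1) => y ^ (r : ℕ) := Summable.of_finite
  have hs : Summable fun z : ℕ × Fin (k+1) => x ^ z.1 * y ^ (z.2 : ℕ) :=
    hsx.mul_of_nonneg hsy (fun n => by positivity) (fun r => by positivity)
  have hpr := Summable.tsum_prod' hs (fun b => (hsy.mul_left (x ^ b)))
  rw [hre, hpr]
  have hinner : ∀ b : ℕ, ∑' r : Fin (k+1), x ^ b * y ^ (r:ℕ) = x ^ b * ∑' r : Fin (k+1), y ^ (r:ℕ) :=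
    fun b => tsum_mul_left
  rw [tsum_congr hinner, tsum_mul_right, tsum_geometric_of_lt_one hx0 hx1, tsum_fintype,
    Fin.sum_univ_eq_sum_range]
  -- finite geometric sum
  have hyne : y ≠ 1 := ne_of_lt hy1
  rw [geom_sum_eq hyne]
  -- final algebra
  have hb : Q ^ ((k+1)^2) = Q ^ (k*(k+1)) * Q ^ (k+1) := by
    rw [← pow_add]; congr 1; ring
  have hg1 : 1 < Q ^ (k*(k+1)) := hpow1 _ (Nat.mul_pos (by omega) (by omega))
  have hd1 : 1 < Q ^ (k+1) := hpow1 _ (by omega)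
  have ha1 : 1 < Q ^ k := hpow1 _ hk1
  have hyk : y ^ (k+1) = (Q ^ (k*(k+1)))⁻¹ := by
    rw [hydef, inv_pow, ← pow_mul]
  rw [hxdef, hcdef, hydef, hyk, hb]
  exact aux_alg (Q ^ k) (Q ^ (k*(k+1))) (Q ^ (k+1)) ha1 hg1 hd1
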